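/- For every integer n ≥ 6, χ_td(KG(n,2)) ≤ n. -/

import Mathlib

/-- The vertex type of the Kneser graph `KG(n,2)`: 2-element subsets of `{0,…,n-1}`. -/
abbrev KVert (n : ℕ) := {s : Finset (Fin n) // s.card = 2}

/-- The Kneser graph `KG(n,2)`: vertices are 2-subsets, adjacent iff disjoint. -/
def KG2 (n : ℕ) : SimpleGraph (KVert n) where
  Adj u v := Disjoint u.1 v.1
  symm := ⟨fun (u v : KVert n) (h : Disjoint u.1 v.1) => h.symm⟩
  loopless := ⟨fun (u : KVert n) (h : Disjoint u.1 u.1) => by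
    have h2 := u.2
    have h' : Disjoint u.1 u.1 := h
    rw [disjoint_self] at h'
    simp [h'] at h2⟩

/-- A proper coloring of `G` with `k` (nonempty) color classes: a partition of the
vertex set into `k` nonempty independent sets. -/
def IsProperColoring {V : Type*} (G : SimpleGraph V) {k : ℕ} (C : Fin k → Set V) : Prop :=
  (∀ v, ∃! i, v ∈ C i) ∧ (∀ i, (C i).Nonempty) ∧
    ∀ i, ∀ u ∈ C i, ∀ w ∈ C i, ¬ G.Adj u w

/-- A total dominator coloring: a proper coloring such that every vertex is adjacent to
all vertices of some (nonempty) color class. -/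
def IsTDColoring {V : Type*} (G : SimpleGraph V) {k : ℕ} (C : Fin k → Set V) : Prop :=
  IsProperColoring G C ∧ ∀ v, ∃ i, (C i).Nonempty ∧ ∀ u ∈ C i, G.Adj v u

/-- The chromatic number: minimum number of color classes in a proper coloring. -/
noncomputable def chromNum {V : Type*} (G : SimpleGraph V) : ℕ :=
  sInf {k | ∃ C : Fin k → Set V, IsProperColoring G C}

/-- The total dominator chromatic number: minimum number of color classes in a TDC. -/
noncomputable def tdChromNum {V : Type*} (G : SimpleGraph V) : ℕ :=
  sInf {k | ∃ C : Fin k → Set V, IsTDColoring G C}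

/-- A total dominating set: every vertex has a neighbor in `S`. -/
def IsTotalDomSet {V : Type*} (G : SimpleGraph V) (S : Set V) : Prop :=
  ∀ v, ∃ u ∈ S, G.Adj v u

/-- The total domination number: minimum size of a total dominating set. -/
noncomputable def totalDomNum {V : Type*} [Fintype V] (G : SimpleGraph V) : ℕ :=
  sInf {k | ∃ S : Finset V, IsTotalDomSet G ↑S ∧ S.card = k}

/-- A set of vertices of `KG(n,2)` is starlike if all its 2-subsets share a common symbol. -/
def Starlike {n : ℕ} (A : Set (KVert n)) : Prop :=
  ∃ a : Fin n, ∀ v ∈ A, a ∈ v.1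

/-- A set of vertices of `KG(n,2)` is triangular if it equals `{{a,b},{a,c},{b,c}}`
for three distinct symbols `a, b, c`. -/
def Triangular {n : ℕ} (A : Set (KVert n)) : Prop :=
  ∃ a b c : Fin n, a ≠ b ∧ a ≠ c ∧ b ≠ c ∧
    A = {v : KVert n | v.1 = {a, b} ∨ v.1 = {a, c} ∨ v.1 = {b, c}}

/-! ### Auxiliary combinatorial gadget on 6 symbols -/

/-- Color class (0..5) of the pair `{a,b}` (`a < b < 6`) in the 6-symbol gadget:
triangles `{0,4,5}, {1,3,4}, {1,2,5}` and stars `{24,02}, {23,35}, {01,03}`. -/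
def kcls : ℕ → ℕ → ℕ
  | 0, 1 => 3 | 0, 2 => 1 | 0, 3 => 3 | 0, 4 => 0 | 0, 5 => 0
  | 1, 2 => 5 | 1, 3 => 4 | 1, 4 => 4 | 1, 5 => 5
  | 2, 3 => 2 | 2, 4 => 1 | 2, 5 => 5
  | 3, 4 => 4 | 3, 5 => 2 | 4, 5 => 0
  | _, _ => 0

/-- Support of class `k`: symbols appearing in some pair of class `k`. -/
def ksupp : ℕ → ℕ → Bool
  | 0, a => a == 0 || a == 4 || a == 5
  | 1, a => a == 0 || a == 2 || a == 4
  | 2, a => a == 2 || a == 3 || a == 5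
  | 3, a => a == 0 || a == 1 || a == 3
  | 4, a => a == 1 || a == 3 || a == 4
  | 5, a => a == 1 || a == 2 || a == 5
  | _, _ => false

lemma kcls_lt6 : ∀ a b : Fin 6, kcls a.1 b.1 < 6 := by decide

lemma kcls_lt (a b : ℕ) (ha : a < 6) (hb : b < 6) : kcls a b < 6 :=
  kcls_lt6 ⟨a, ha⟩ ⟨b, hb⟩

lemma kcls_supp6 : ∀ a b : Fin 6, a.1 < b.1 →
    ksupp (kcls a.1 b.1) a.1 = true ∧ ksupp (kcls a.1 b.1) b.1 = true := by decide

lemma kcls_supp (a b : ℕ) (ha : a < 6) (hb : b < 6) (h : a < b) :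
    ksupp (kcls a b) a = true ∧ ksupp (kcls a b) b = true :=
  kcls_supp6 ⟨a, ha⟩ ⟨b, hb⟩ h

lemma kcls_inter6 : ∀ a b a' b' : Fin 6, a.1 < b.1 → a'.1 < b'.1 →
    kcls a.1 b.1 = kcls a'.1 b'.1 →
    a.1 = a'.1 ∨ a.1 = b'.1 ∨ b.1 = a'.1 ∨ b.1 = b'.1 := by decide

lemma kcls_inter (a b a' b' : ℕ) (ha : a < 6) (hb : b < 6) (ha' : a' < 6) (hb' : b' < 6)
    (h : a < b) (h' : a' < b') (he : kcls a b = kcls a' b') :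
    a = a' ∨ a = b' ∨ b = a' ∨ b = b' :=
  kcls_inter6 ⟨a, ha⟩ ⟨b, hb⟩ ⟨a', ha'⟩ ⟨b', hb'⟩ h h' he

lemma kcls_surj6 : ∀ k : Fin 6, ∃ a b : Fin 6, a.1 < b.1 ∧ kcls a.1 b.1 = k.1 := by decide

lemma kcls_surj (k : ℕ) (hk : k < 6) : ∃ a b : ℕ, a < 6 ∧ b < 6 ∧ a < b ∧ kcls a b = k := by
  obtain ⟨a, b, h1, h2⟩ := kcls_surj6 ⟨k, hk⟩
  exact ⟨a.1, b.1, a.2, b.2, h1, h2⟩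

lemma ksupp_avoid6 : ∀ a b : Fin 6,
    ∃ k : Fin 6, ksupp k.1 a.1 = false ∧ ksupp k.1 b.1 = false := by decide

lemma ksupp_avoid (a b : ℕ) (ha : a < 6) (hb : b < 6) :
    ∃ k : ℕ, k < 6 ∧ ksupp k a = false ∧ ksupp k b = false := by
  obtain ⟨k, h1, h2⟩ := ksupp_avoid6 ⟨a, ha⟩ ⟨b, hb⟩
  exact ⟨k.1, k.2, h1, h2⟩

/-- A 2-element finset is characterized by its two (ordered) elements. -/
lemma two_card_mem {α : Type*} [LinearOrder α] {s : Finset α} (h : s.card = 2) :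
    ∃ x y : α, x < y ∧ ∀ z, z ∈ s ↔ z = x ∨ z = y := by
  have hne : s.Nonempty := by rw [← Finset.card_pos, h]; norm_num
  have h1 : 1 < s.card := by omega
  refine ⟨s.min' hne, s.max' hne, Finset.min'_lt_max'_of_card s h1, ?_⟩
  intro z
  constructor
  · intro hz
    by_cases hmin : z = s.min' hne
    · exact Or.inl hmin
    · right
      have hle : z ≤ s.max' hne := Finset.le_max' s z hz
      have hge : s.min' hne ≤ z := Finset.min'_le s z hz
      -- s has card 2, so s = {min, max}
      have hsub : ({s.min' hne, s.max' hne} : Finset α) ⊆ s := by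
        intro w hw
        simp only [Finset.mem_insert, Finset.mem_singleton] at hw
        rcases hw with rfl | rfl
        · exact s.min'_mem hne
        · exact s.max'_mem hne
      have hcard2 : ({s.min' hne, s.max' hne} : Finset α).card = 2 :=
        Finset.card_pair (ne_of_lt (Finset.min'_lt_max'_of_card s h1))
      have hseq : s = {s.min' hne, s.max' hne} :=
        (Finset.eq_of_subset_of_card_le hsub (by rw [h, hcard2])).symm
      rw [hseq] at hz
      simp only [Finset.mem_insert, Finset.mem_singleton] at hz
      tauto
  · intro hz
    rcases hz with rfl | rfl
    · exact s.min'_mem hne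
    · exact s.max'_mem hne

/-- For every `n ≥ 6`, `χ_td(KG(n,2)) ≤ n`. -/
theorem stmt8 (n : ℕ) (hn : 6 ≤ n) :
    tdChromNum (KG2 n) ≤ n := by
  have hcol : ∀ v : KVert n, ∃ x y : Fin n, x < y ∧ ∀ z, z ∈ v.1 ↔ z = x ∨ z = y :=
    fun v => two_card_mem v.2
  choose fx fy hxy hmem using hcol
  -- color function (as a natural number < n)
  let cnat : KVert n → ℕ := fun v =>
    if (fx v).1 < n - 6 then (fx v).1
    else n - 6 + kcls ((fx v).1 - (n - 6)) ((fy v).1 - (n - 6))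
  have hc_lt : ∀ v, cnat v < n := by
    intro v
    by_cases h : (fx v).1 < n - 6
    · simp only [cnat, if_pos h]; omega
    · simp only [cnat, if_neg h]
      have hx6 : (fx v).1 - (n - 6) < 6 := by have := (fx v).2; omega
      have hy6 : (fy v).1 - (n - 6) < 6 := by have := (fy v).2; omega
      have := kcls_lt _ _ hx6 hy6
      omega
  let c : KVert n → Fin n := fun v => ⟨cnat v, hc_lt v⟩
  let C : Fin n → Set (KVert n) := fun i => {v | c v = i}
  -- nonempty classes
  have hne : ∀ i : Fin n, (C i).Nonempty := by
    intro i
    by_cases h : i.1 < n - 6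
    · -- witness: {i, i+1}
      have h1 : i.1 < n := i.2
      have h2 : i.1 + 1 < n := by omega
      set x : Fin n := ⟨i.1, h1⟩ with hxdef
      set y : Fin n := ⟨i.1 + 1, h2⟩ with hydef
      have hxlty : x < y := by simp only [hxdef, hydef, Fin.lt_def]; omega
      have hcard : ({x, y} : Finset (Fin n)).card = 2 := Finset.card_pair (ne_of_lt hxlty)
      set v : KVert n := ⟨{x, y}, hcard⟩ with hvdef
      have hxv : x = fx v ∨ x = fy v := (hmem v x).mp (by simp [hvdef])
      have hyv : y = fx v ∨ y = fy v := (hmem v y).mp (by simp [hvdef])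
      have hfxy := hxy v
      have hfx : fx v = x := by
        rcases hxv with h' | h' <;> rcases hyv with h'' | h''
        · exact h'.symm
        · exact h'.symm
        · exfalso; rw [← h', ← h''] at hfxy
          exact absurd (hfxy.trans hxlty) (lt_irrefl _)
        · exfalso; rw [← h'] at h''; exact absurd (h''.symm ▸ hxlty) (lt_irrefl y)
      refine ⟨v, ?_⟩
      show c v = i
      apply Fin.ext
      show cnat v = i.1
      simp only [cnat, hfx, hxdef]
      rw [if_pos h]
    · -- witness from kcls_surj
      push_neg at h
      have hk6 : i.1 - (n - 6) < 6 := by have := i.2; omega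
      obtain ⟨a, b, ha6, hb6, hab, hcls⟩ := kcls_surj (i.1 - (n - 6)) hk6
      have ha : n - 6 + a < n := by omega
      have hb : n - 6 + b < n := by omega
      set x : Fin n := ⟨n - 6 + a, ha⟩ with hxdef
      set y : Fin n := ⟨n - 6 + b, hb⟩ with hydef
      have hxlty : x < y := by simp only [hxdef, hydef, Fin.lt_def]; omega
      have hcard : ({x, y} : Finset (Fin n)).card = 2 := Finset.card_pair (ne_of_lt hxlty)
      set v : KVert n := ⟨{x, y}, hcard⟩ with hvdef
      have hxv : x = fx v ∨ x = fy v := (hmem v x).mp (by simp [hvdef])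
      have hyv : y = fx v ∨ y = fy v := (hmem v y).mp (by simp [hvdef])
      have hfxy := hxy v
      have hfx : fx v = x ∧ fy v = y := by
        rcases hxv with h' | h' <;> rcases hyv with h'' | h''
        · exfalso; rw [← h'] at h''; exact absurd (h''.symm ▸ hxlty) (lt_irrefl x)
        · exact ⟨h'.symm, h''.symm⟩
        · exfalso; rw [← h', ← h''] at hfxy
          exact absurd (hfxy.trans hxlty) (lt_irrefl _)
        · exfalso; rw [← h'] at h''; exact absurd (h''.symm ▸ hxlty) (lt_irrefl y)
      refine ⟨v, ?_⟩
      show c v = i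
      apply Fin.ext
      show cnat v = i.1
      simp only [cnat, hfx.1, hfx.2, hxdef, hydef]
      rw [if_neg (by omega)]
      have hax : n - 6 + a - (n - 6) = a := by omega
      have hby : n - 6 + b - (n - 6) = b := by omega
      rw [hax, hby, hcls]
      have := i.2
      omega
  -- main claim
  have hmemS : n ∈ {k | ∃ C : Fin k → Set (KVert n), IsTDColoring (KG2 n) C} := by
    refine ⟨C, ⟨⟨?_, hne, ?_⟩, ?_⟩⟩
    · -- unique class
      intro v
      exact ⟨c v, rfl, fun j hj => hj.symm⟩
    · -- independence
      intro i u hu w hw hadj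
      have hu' : c u = i := hu
      have hw' : c w = i := hw
      have hdisj : Disjoint u.1 w.1 := hadj
      have hcnat : cnat u = cnat w := by
        have h1 : (c u).1 = (c w).1 := by rw [hu', hw']
        exact h1
      have hcontra : ∀ z : Fin n, z ∈ u.1 → z ∈ w.1 → False := by
        intro z h1 h2
        exact (Finset.disjoint_left.mp hdisj h1) h2
      by_cases h : (fx u).1 < n - 6
      · simp only [cnat, if_pos h] at hcnat
        by_cases h2 : (fx w).1 < n - 6
        · simp only [if_pos h2] at hcnat
          have heq : fx u = fx w := Fin.ext hcnat
          exact hcontra (fx u) ((hmem u (fx u)).mpr (Or.inl rfl))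
            (by rw [heq]; exact (hmem w (fx w)).mpr (Or.inl rfl))
        · simp only [if_neg h2] at hcnat; omega
      · by_cases h2 : (fx w).1 < n - 6
        · simp only [cnat, if_neg h, if_pos h2] at hcnat; omega
        · simp only [cnat, if_neg h, if_neg h2] at hcnat
          push_neg at h h2
          have hxu6 : (fx u).1 - (n - 6) < 6 := by have := (fx u).2; omega
          have hyu6 : (fy u).1 - (n - 6) < 6 := by have := (fy u).2; omega
          have hxw6 : (fx w).1 - (n - 6) < 6 := by have := (fx w).2; omega
          have hyw6 : (fy w).1 - (n - 6) < 6 := by have := (fy w).2; omega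
          have hltu := hxy u
          have hltw := hxy w
          rw [Fin.lt_def] at hltu hltw
          have hlt1 : (fx u).1 - (n - 6) < (fy u).1 - (n - 6) := by omega
          have hlt2 : (fx w).1 - (n - 6) < (fy w).1 - (n - 6) := by omega
          have heq : kcls ((fx u).1 - (n - 6)) ((fy u).1 - (n - 6))
              = kcls ((fx w).1 - (n - 6)) ((fy w).1 - (n - 6)) := by omega
          have hcases := kcls_inter _ _ _ _ hxu6 hyu6 hxw6 hyw6 hlt1 hlt2 heq
          rcases hcases with hcc | hcc | hcc | hcc
          · have heq2 : fx u = fx w := Fin.ext (by omega)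
            exact hcontra (fx u) ((hmem u _).mpr (Or.inl rfl))
              (by rw [heq2]; exact (hmem w _).mpr (Or.inl rfl))
          · have heq2 : fx u = fy w := Fin.ext (by omega)
            exact hcontra (fx u) ((hmem u _).mpr (Or.inl rfl))
              (by rw [heq2]; exact (hmem w _).mpr (Or.inr rfl))
          · have heq2 : fy u = fx w := Fin.ext (by omega)
            exact hcontra (fy u) ((hmem u _).mpr (Or.inr rfl))
              (by rw [heq2]; exact (hmem w _).mpr (Or.inl rfl))
          · have heq2 : fy u = fy w := Fin.ext (by omega)
            exact hcontra (fy u) ((hmem u _).mpr (Or.inr rfl))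
              (by rw [heq2]; exact (hmem w _).mpr (Or.inr rfl))
    · -- total domination
      intro v
      have ha6 : (if n - 6 ≤ (fx v).1 then (fx v).1 - (n - 6) else 0) < 6 := by
        have := (fx v).2; split <;> omega
      have hb6 : (if n - 6 ≤ (fy v).1 then (fy v).1 - (n - 6) else 0) < 6 := by
        have := (fy v).2; split <;> omega
      obtain ⟨k, hk6, hk1, hk2⟩ := ksupp_avoid _ _ ha6 hb6
      have hkn : n - 6 + k < n := by omega
      refine ⟨⟨n - 6 + k, hkn⟩, hne _, ?_⟩
      intro u hu
      have hu' : c u = ⟨n - 6 + k, hkn⟩ := hu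
      have hcu : cnat u = n - 6 + k := by
        have h1 : (c u).1 = n - 6 + k := by rw [hu']
        exact h1
      have htop : ¬ (fx u).1 < n - 6 := by
        intro h
        simp only [cnat, if_pos h] at hcu
        omega
      simp only [cnat, if_neg htop] at hcu
      push_neg at htop
      have hxu6 : (fx u).1 - (n - 6) < 6 := by have := (fx u).2; omega
      have hyu6 : (fy u).1 - (n - 6) < 6 := by have := (fy u).2; omega
      have hltu := hxy u
      rw [Fin.lt_def] at hltu
      have hlt1 : (fx u).1 - (n - 6) < (fy u).1 - (n - 6) := by omega
      have hclsk : kcls ((fx u).1 - (n - 6)) ((fy u).1 - (n - 6)) = k := by omega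
      have hsupp := kcls_supp _ _ hxu6 hyu6 hlt1
      rw [hclsk] at hsupp
      show Disjoint v.1 u.1
      rw [Finset.disjoint_left]
      intro z hzv hzu
      have hz1 := (hmem v z).mp hzv
      have hz2 := (hmem u z).mp hzu
      have hztop : n - 6 ≤ z.1 := by
        rcases hz2 with rfl | rfl
        · exact htop
        · omega
      have hzt : ksupp k (z.1 - (n - 6)) = true := by
        rcases hz2 with rfl | rfl
        · exact hsupp.1
        · exact hsupp.2
      have hzf : ksupp k (z.1 - (n - 6)) = false := by
        rcases hz1 with rfl | rfl
        · rw [if_pos hztop] at hk1; exact hk1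
        · rw [if_pos hztop] at hk2; exact hk2
      rw [hzt] at hzf
      simp at hzf
  exact Nat.sInf_le hmemS
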